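/- Let A, B ∈ M_n. Then there exist unitary matrices U, V ∈ M_n such that |A + B| ≤ U|A|U* + V|B|V*. -/

import Mathlib

open Matrix Set ComplexOrder

variable {m : Type*}

/-- The modulus `|X| = (XᴴX)^{1/2}` of a matrix. -/
noncomputable def matAbs [Fintype m] [DecidableEq m] (X : Matrix m m ℂ) : Matrix m m ℂ :=
  (Matrix.posSemidef_conjTranspose_mul_self X).1.eigenvectorUnitary.1 *
    diagonal ((↑) ∘ (√·) ∘ (Matrix.posSemidef_conjTranspose_mul_self X).1.eigenvalues) *
    (star (Matrix.posSemidef_conjTranspose_mul_self X).1.eigenvectorUnitary : Matrix m m ℂ)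

theorem matAbs_posSemidef [Fintype m] [DecidableEq m] (X : Matrix m m ℂ) :
    (matAbs X).PosSemidef := by
  unfold matAbs
  have hd : (diagonal ((↑) ∘ (√·) ∘
      (Matrix.posSemidef_conjTranspose_mul_self X).1.eigenvalues) : Matrix m m ℂ).PosSemidef := by
    rw [Matrix.posSemidef_diagonal_iff]
    intro i
    simp only [Function.comp_apply]
    exact_mod_cast Real.sqrt_nonneg _
  exact hd.mul_mul_conjTranspose_same _

theorem matAbs_mul_self [Fintype m] [DecidableEq m] (X : Matrix m m ℂ) :
    matAbs X * matAbs X = Xᴴ * X := by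
  set h := (Matrix.posSemidef_conjTranspose_mul_self X).1 with hh
  have hU : (star h.eigenvectorUnitary : Matrix m m ℂ) * h.eigenvectorUnitary.1 = 1 :=
    Unitary.coe_star_mul_self _
  have hev : ∀ i, 0 ≤ h.eigenvalues i :=
    (Matrix.posSemidef_conjTranspose_mul_self X).eigenvalues_nonneg
  unfold matAbs
  calc h.eigenvectorUnitary.1 * diagonal ((↑) ∘ (√·) ∘ h.eigenvalues) *
        (star h.eigenvectorUnitary : Matrix m m ℂ) *
        (h.eigenvectorUnitary.1 * diagonal ((↑) ∘ (√·) ∘ h.eigenvalues) *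
        (star h.eigenvectorUnitary : Matrix m m ℂ))
      = h.eigenvectorUnitary.1 * (diagonal ((↑) ∘ (√·) ∘ h.eigenvalues) *
        ((star h.eigenvectorUnitary : Matrix m m ℂ) * h.eigenvectorUnitary.1) *
        diagonal ((↑) ∘ (√·) ∘ h.eigenvalues)) *
        (star h.eigenvectorUnitary : Matrix m m ℂ) := by
        simp only [Matrix.mul_assoc]
    _ = h.eigenvectorUnitary.1 * Matrix.diagonal (RCLike.ofReal ∘ h.eigenvalues) *
        (star h.eigenvectorUnitary : Matrix m m ℂ) := by
        rw [hU, Matrix.mul_one, diagonal_mul_diagonal]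
        congr 2
        refine congrArg Matrix.diagonal (funext fun i => ?_)
        simp only [Function.comp_apply]
        rw [← Complex.ofReal_mul, Real.mul_self_sqrt (hev i)]
        rfl
    _ = Xᴴ * X := by
        conv_rhs => rw [h.spectral_theorem, Unitary.conjStarAlgAut_apply]

/-- Functional calculus: apply `f : ℝ → ℝ` to a Hermitian matrix via its spectral
decomposition (junk value `0` for non-Hermitian input). -/
noncomputable def matFun [Fintype m] [DecidableEq m] (f : ℝ → ℝ) (X : Matrix m m ℂ) :
    Matrix m m ℂ :=
  if h : X.IsHermitian then
    (h.eigenvectorUnitary : Matrix m m ℂ) *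
      Matrix.diagonal (fun i => (f (h.eigenvalues i) : ℂ)) *
      star (h.eigenvectorUnitary : Matrix m m ℂ)
  else 0

/-- Real part `Re A = (A + Aᴴ)/2`. -/
noncomputable def reM (A : Matrix m m ℂ) : Matrix m m ℂ := (1/2 : ℂ) • (A + Aᴴ)

/-- Imaginary part `Im A = (A - Aᴴ)/(2i)`. -/
noncomputable def imM (A : Matrix m m ℂ) : Matrix m m ℂ := (1/(2*Complex.I)) • (A - Aᴴ)

/-- Numerical range `W(A) = {x* A x : x*x = 1}`. -/
def numRange [Fintype m] (A : Matrix m m ℂ) : Set ℂ :=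
  {z | ∃ x : m → ℂ, star x ⬝ᵥ x = 1 ∧ z = star x ⬝ᵥ A.mulVec x}

/-- The sector `S_α = {z : Re z ≥ 0, |Im z| ≤ (Re z) tan α}`. -/
def sector (α : ℝ) : Set ℂ := {z | 0 ≤ z.re ∧ |z.im| ≤ z.re * Real.tan α}

section ThompsonAux

variable {n : ℕ}

local notation "E" => EuclideanSpace ℂ (Fin n)

noncomputable def obMat (f : OrthonormalBasis (Fin n) ℂ E) : Matrix (Fin n) (Fin n) ℂ :=
  (EuclideanSpace.basisFun (Fin n) ℂ).toBasis.toMatrix f.toBasis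

lemma obMat_mem (f : OrthonormalBasis (Fin n) ℂ E) : obMat f ∈ Matrix.unitaryGroup (Fin n) ℂ :=
  (EuclideanSpace.basisFun (Fin n) ℂ).toMatrix_orthonormalBasis_mem_unitary f

lemma obMat_apply (f : OrthonormalBasis (Fin n) ℂ E) (i j : Fin n) :
    obMat f i j = (f j : Fin n → ℂ) i := rfl

lemma obMat_mulVec_single (f : OrthonormalBasis (Fin n) ℂ E) (j : Fin n) :
    obMat f *ᵥ Pi.single j 1 = (f j : Fin n → ℂ) := by
  simp only [mulVec_single_one]; rfl

-- columns determine matrices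
lemma eq_of_mulVec_single {M N : Matrix (Fin n) (Fin n) ℂ}
    (h : ∀ j, M *ᵥ Pi.single j 1 = N *ᵥ Pi.single j 1) : M = N := by
  ext i j
  have := congrFun (h j) i
  simpa [mulVec_single] using this

lemma diag_of_eigenbasis {H : Matrix (Fin n) (Fin n) ℂ}
    (f : OrthonormalBasis (Fin n) ℂ E) (d : Fin n → ℂ)
    (hf : ∀ j, H *ᵥ (f j : Fin n → ℂ) = d j • (f j : Fin n → ℂ)) :
    H = obMat f * diagonal d * (obMat f)ᴴ := by
  have hu : obMat f * (obMat f)ᴴ = 1 := by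
    have := (Matrix.mem_unitaryGroup_iff).mp (obMat_mem f)
    simpa [Matrix.star_eq_conjTranspose] using this
  have key : H * obMat f = obMat f * diagonal d := by
    apply eq_of_mulVec_single
    intro j
    rw [← mulVec_mulVec, ← mulVec_mulVec, obMat_mulVec_single, hf j,
      Matrix.diagonal_mulVec_single]
    rw [show (Pi.single j (d j * 1) : Fin n → ℂ) = d j • (Pi.single j 1 : Fin n → ℂ) by
      ext i; simp [Pi.single_apply]]
    rw [mulVec_smul, obMat_mulVec_single]
  calc H = H * (obMat f * (obMat f)ᴴ) := by rw [hu, Matrix.mul_one]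
    _ = (H * obMat f) * (obMat f)ᴴ := by rw [Matrix.mul_assoc]
    _ = obMat f * diagonal d * (obMat f)ᴴ := by rw [key]

lemma dot_star_self (v : Fin n → ℂ) :
    star v ⬝ᵥ v = ((∑ i, Complex.normSq (v i) : ℝ) : ℂ) := by
  simp [dotProduct, Complex.normSq_eq_conj_mul_self]

lemma quad_diag (S : Matrix (Fin n) (Fin n) ℂ) (d : Fin n → ℝ) (x : Fin n → ℂ) :
    star x ⬝ᵥ ((S * diagonal (fun i => (d i : ℂ)) * Sᴴ) *ᵥ x)
      = ((∑ i, d i * Complex.normSq ((Sᴴ *ᵥ x) i) : ℝ) : ℂ) := by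
  have h1 : (S * diagonal (fun i => (d i : ℂ)) * Sᴴ) *ᵥ x
      = S *ᵥ (diagonal (fun i => (d i : ℂ)) *ᵥ (Sᴴ *ᵥ x)) := by
    rw [mulVec_mulVec, mulVec_mulVec]
  rw [h1, dotProduct_mulVec]
  have h2 : star x ᵥ* S = star (Sᴴ *ᵥ x) := by
    rw [star_mulVec, conjTranspose_conjTranspose]
  rw [h2]
  set z := Sᴴ *ᵥ x
  simp only [dotProduct, mulVec_diagonal, Pi.star_apply, Complex.ofReal_sum]
  congr 1; ext i
  push_cast [Complex.normSq_eq_conj_mul_self]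
  simp only [RingHom.coe_coe, Complex.star_def]
  ring

lemma dot_unitary_invariant {S : Matrix (Fin n) (Fin n) ℂ}
    (hS : S ∈ Matrix.unitaryGroup (Fin n) ℂ) (x : Fin n → ℂ) :
    star (Sᴴ *ᵥ x) ⬝ᵥ (Sᴴ *ᵥ x) = star x ⬝ᵥ x := by
  rw [star_mulVec, conjTranspose_conjTranspose, dotProduct_mulVec, vecMul_vecMul]
  have : S * Sᴴ = 1 := by simpa [Matrix.star_eq_conjTranspose] using (Matrix.mem_unitaryGroup_iff).mp hS
  rw [this, vecMul_one]

lemma exists_constrained (S T : Matrix (Fin n) (Fin n) ℂ) (j : Fin n) :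
    ∃ x : Fin n → ℂ, x ≠ 0 ∧ (∀ k : Fin n, k < j → (Sᴴ *ᵥ x) k = 0) ∧
      (∀ k : Fin n, j < k → (Tᴴ *ᵥ x) k = 0) := by
  let φ : (Fin n → ℂ) →ₗ[ℂ] ((Set.Iio j) → ℂ) × ((Set.Ioi j) → ℂ) :=
    { toFun := fun x => (fun k => (Sᴴ *ᵥ x) k.1, fun k => (Tᴴ *ᵥ x) k.1)
      map_add' := by intro x y; ext k <;> simp [mulVec_add]
      map_smul' := by intro c x; ext k <;> simp [mulVec_smul] }
  have hcard : Module.finrank ℂ (((Set.Iio j) → ℂ) × ((Set.Ioi j) → ℂ)) < 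
      Module.finrank ℂ (Fin n → ℂ) := by
    rw [Module.finrank_prod, Module.finrank_pi, Module.finrank_pi, Module.finrank_pi]
    rw [Fintype.card_Iio, Fintype.card_Ioi, Fin.card_Iio, Fin.card_Ioi, Fintype.card_fin]
    omega
  have := LinearMap.ker_ne_bot_of_finrank_lt (f := φ) hcard
  rw [Submodule.ne_bot_iff] at this
  obtain ⟨x, hx, hx0⟩ := this
  refine ⟨x, hx0, ?_, ?_⟩
  · intro k hk
    have := congrFun (congrArg Prod.fst hx) ⟨k, hk⟩
    simpa [φ] using this
  · intro k hk
    have := congrFun (congrArg Prod.snd hx) ⟨k, hk⟩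
    simpa [φ] using this

lemma coe_smul_vec (r : ℝ) (v : Fin n → ℂ) : (r : ℂ) • v = r • v := by
  ext i; simp [Complex.real_smul]

lemma mulVec_dot_self (P : Matrix (Fin n) (Fin n) ℂ) (x : Fin n → ℂ) :
    star (P *ᵥ x) ⬝ᵥ (P *ᵥ x) = star x ⬝ᵥ ((Pᴴ * P) *ᵥ x) := by
  rw [star_mulVec, dotProduct_mulVec, vecMul_vecMul, ← dotProduct_mulVec]

lemma key_lemma {Hm Pm : Matrix (Fin n) (Fin n) ℂ} (hH : Hm.IsHermitian) (hP : Pm.PosSemidef)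
    (hyp : ∀ x : Fin n → ℂ, (star x ⬝ᵥ (Hm *ᵥ x)).re ≤
      Real.sqrt ((star x ⬝ᵥ x).re * (star (Pm *ᵥ x) ⬝ᵥ (Pm *ᵥ x)).re)) :
    ∃ V ∈ Matrix.unitaryGroup (Fin n) ℂ, (V * Pm * Vᴴ - Hm).PosSemidef := by
  classical
  set μ := hH.eigenvalues with hμ
  set σ := hP.1.eigenvalues with hσ
  set p := Tuple.sort μ with hp
  set q := Tuple.sort σ with hq
  set f := hH.eigenvectorBasis.reindex p.symm with hf
  set g := hP.1.eigenvectorBasis.reindex q.symm with hg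
  set F := obMat f with hF
  set G := obMat g with hG
  have hFu : F ∈ Matrix.unitaryGroup (Fin n) ℂ := obMat_mem f
  have hGu : G ∈ Matrix.unitaryGroup (Fin n) ℂ := obMat_mem g
  -- diagonalizations
  have hHd : Hm = F * diagonal (fun k => (μ (p k) : ℂ)) * Fᴴ := by
    apply diag_of_eigenbasis
    intro k
    have h1 := hH.mulVec_eigenvectorBasis (p k)
    have h2 : (f k : Fin n → ℂ) = (hH.eigenvectorBasis (p k) : Fin n → ℂ) := by
      rw [hf, OrthonormalBasis.coe_reindex]
      simp
    have h1' : Hm *ᵥ (hH.eigenvectorBasis (p k) : Fin n → ℂ)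
        = (μ (p k) : ℂ) • (hH.eigenvectorBasis (p k) : Fin n → ℂ) := by
      rw [coe_smul_vec]; exact h1
    rw [h2]; exact h1'
  have hPd : Pm = G * diagonal (fun k => (σ (q k) : ℂ)) * Gᴴ := by
    apply diag_of_eigenbasis
    intro k
    have h1 := hP.1.mulVec_eigenvectorBasis (q k)
    have h2 : (g k : Fin n → ℂ) = (hP.1.eigenvectorBasis (q k) : Fin n → ℂ) := by
      rw [hg, OrthonormalBasis.coe_reindex]
      simp
    have h1' : Pm *ᵥ (hP.1.eigenvectorBasis (q k) : Fin n → ℂ)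
        = (σ (q k) : ℂ) • (hP.1.eigenvectorBasis (q k) : Fin n → ℂ) := by
      rw [coe_smul_vec]; exact h1
    rw [h2]; exact h1'
  have hσ0 : ∀ i, 0 ≤ σ i := hP.eigenvalues_nonneg
  -- main eigenvalue comparison
  have main : ∀ k, μ (p k) ≤ σ (q k) := by
    intro j
    obtain ⟨x, hx0, hy, hz⟩ := exists_constrained F G j
    set y := Fᴴ *ᵥ x with hyy
    set z := Gᴴ *ᵥ x with hzz
    have hnx : (star x ⬝ᵥ x) = ((∑ i, Complex.normSq (x i) : ℝ) : ℂ) := dot_star_self x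
    have hxpos : 0 < (∑ i, Complex.normSq (x i) : ℝ) := by
      obtain ⟨i, hi⟩ := Function.ne_iff.mp hx0
      exact Finset.sum_pos' (fun i _ => Complex.normSq_nonneg _)
        ⟨i, Finset.mem_univ i, Complex.normSq_pos.mpr hi⟩
    set N := (∑ i, Complex.normSq (x i) : ℝ) with hN
    -- sums of coords
    have hyN : (∑ i, Complex.normSq (y i) : ℝ) = N := by
      have := dot_unitary_invariant hFu x
      rw [← hyy] at this
      rw [dot_star_self, dot_star_self] at this
      exact_mod_cast this
    have hzN : (∑ i, Complex.normSq (z i) : ℝ) = N := by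
      have := dot_unitary_invariant hGu x
      rw [← hzz] at this
      rw [dot_star_self, dot_star_self] at this
      exact_mod_cast this
    -- H quadratic form
    have hHq : (star x ⬝ᵥ (Hm *ᵥ x)).re = ∑ i, μ (p i) * Complex.normSq (y i) := by
      rw [hHd, quad_diag F (fun k => μ (p k)) x, Complex.ofReal_re, ← hyy]
    -- lower bound
    have hHlow : μ (p j) * N ≤ (star x ⬝ᵥ (Hm *ᵥ x)).re := by
      rw [hHq, ← hyN, Finset.mul_sum]
      apply Finset.sum_le_sum
      intro i _
      rcases lt_or_ge i j with h | h
      · rw [hy i h]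
        simp
      · have : μ (p j) ≤ μ (p i) := Tuple.monotone_sort μ h
        exact mul_le_mul_of_nonneg_right this (Complex.normSq_nonneg _)
    -- P² quadratic form
    have hGu1 : Gᴴ * G = 1 := by
      simpa [Matrix.star_eq_conjTranspose] using Matrix.mem_unitaryGroup_iff'.mp hGu
    have hPsq : Pmᴴ * Pm = G * diagonal (fun k => (((σ (q k))^2 : ℝ) : ℂ)) * Gᴴ := by
      rw [hP.1.eq]
      calc Pm * Pm = (G * diagonal (fun k => ((σ (q k) : ℝ) : ℂ)) * Gᴴ)
            * (G * diagonal (fun k => ((σ (q k) : ℝ) : ℂ)) * Gᴴ) := by rw [← hPd]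
        _ = G * (diagonal (fun k => ((σ (q k) : ℝ) : ℂ)) * (Gᴴ * G)
              * diagonal (fun k => ((σ (q k) : ℝ) : ℂ))) * Gᴴ := by
            simp only [Matrix.mul_assoc]
        _ = G * diagonal (fun k => (((σ (q k))^2 : ℝ) : ℂ)) * Gᴴ := by
            rw [hGu1, Matrix.mul_one, diagonal_mul_diagonal]
            congr 1
            congr 1
            ext k
            push_cast
            ring_nf
    have hPq : (star (Pm *ᵥ x) ⬝ᵥ (Pm *ᵥ x)).re
        = ∑ i, (σ (q i))^2 * Complex.normSq (z i) := by
      rw [mulVec_dot_self, hPsq, quad_diag G (fun k => (σ (q k))^2) x,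
        Complex.ofReal_re, ← hzz]
    have hPup : (star (Pm *ᵥ x) ⬝ᵥ (Pm *ᵥ x)).re ≤ (σ (q j))^2 * N := by
      rw [hPq, ← hzN, Finset.mul_sum]
      apply Finset.sum_le_sum
      intro i _
      rcases lt_or_ge j i with h | h
      · rw [hz i h]
        simp
      · have h1 : σ (q i) ≤ σ (q j) := Tuple.monotone_sort σ h
        have h2 : 0 ≤ σ (q i) := hσ0 _
        have : (σ (q i))^2 ≤ (σ (q j))^2 := by nlinarith
        exact mul_le_mul_of_nonneg_right this (Complex.normSq_nonneg _)
    -- combine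
    have hhyp := hyp x
    rw [hnx] at hhyp
    simp only [Complex.ofReal_re] at hhyp
    have hstep : (star x ⬝ᵥ (Hm *ᵥ x)).re ≤ Real.sqrt (N * ((σ (q j))^2 * N)) := by
      refine le_trans hhyp (Real.sqrt_le_sqrt ?_)
      exact mul_le_mul_of_nonneg_left hPup (le_of_lt hxpos)
    have hsq : Real.sqrt (N * ((σ (q j))^2 * N)) = σ (q j) * N := by
      rw [show N * ((σ (q j))^2 * N) = (σ (q j) * N)^2 by ring]
      exact Real.sqrt_sq (mul_nonneg (hσ0 _) hxpos.le)
    have : μ (p j) * N ≤ σ (q j) * N := le_trans hHlow (by rw [← hsq]; exact hstep)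
    exact le_of_mul_le_mul_right this hxpos
  -- conclusion
  have hGu1 : Gᴴ * G = 1 := by
    simpa [Matrix.star_eq_conjTranspose] using Matrix.mem_unitaryGroup_iff'.mp hGu
  refine ⟨F * Gᴴ, ?_, ?_⟩
  · exact mul_mem hFu (Unitary.star_mem hGu)
  · have hconj : (F * Gᴴ) * Pm * (F * Gᴴ)ᴴ
        = F * diagonal (fun k => ((σ (q k) : ℝ) : ℂ)) * Fᴴ := by
      rw [hPd, conjTranspose_mul, conjTranspose_conjTranspose]
      calc F * Gᴴ * (G * diagonal (fun k => ((σ (q k) : ℝ) : ℂ)) * Gᴴ) * (G * Fᴴ)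
          = F * ((Gᴴ * G) * diagonal (fun k => ((σ (q k) : ℝ) : ℂ)) * (Gᴴ * G)) * Fᴴ := by
            simp only [Matrix.mul_assoc]
        _ = F * diagonal (fun k => ((σ (q k) : ℝ) : ℂ)) * Fᴴ := by
            rw [hGu1, Matrix.one_mul, Matrix.mul_one]
    rw [hconj, hHd]
    have hdiff : F * diagonal (fun k => ((σ (q k) : ℝ) : ℂ)) * Fᴴ
        - F * diagonal (fun k => ((μ (p k) : ℝ) : ℂ)) * Fᴴ
        = F * diagonal (fun k => ((σ (q k) - μ (p k) : ℝ) : ℂ)) * Fᴴ := by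
      rw [← Matrix.sub_mul, ← Matrix.mul_sub, diagonal_sub]
      push_cast
      rfl
    rw [hdiff]
    refine Matrix.PosSemidef.mul_mul_conjTranspose_same ?_ F
    rw [Matrix.posSemidef_diagonal_iff]
    intro i
    rw [Complex.zero_le_real]
    linarith [main i]

lemma inner_eq_dot (u v : EuclideanSpace ℂ (Fin n)) :
    (inner ℂ u v : ℂ) = star (u : Fin n → ℂ) ⬝ᵥ (v : Fin n → ℂ) := by
  simp [PiLp.inner_apply, dotProduct, RCLike.inner_apply, mul_comm]

lemma mulVec_dot_mulVec (C : Matrix (Fin n) (Fin n) ℂ) (u w : Fin n → ℂ) :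
    star (C *ᵥ u) ⬝ᵥ (C *ᵥ w) = star u ⬝ᵥ ((Cᴴ * C) *ᵥ w) := by
  rw [star_mulVec, dotProduct_mulVec, vecMul_vecMul, ← dotProduct_mulVec]

lemma polar_decomp {C P : Matrix (Fin n) (Fin n) ℂ} (hP : P.PosSemidef)
    (hPC : P * P = Cᴴ * C) : ∃ W ∈ Matrix.unitaryGroup (Fin n) ℂ, C = W * P := by
  classical
  set σ := hP.1.eigenvalues with hσ
  set b := hP.1.eigenvectorBasis with hb
  have hσ0 : ∀ i, 0 ≤ σ i := hP.eigenvalues_nonneg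
  have hbe : ∀ j, P *ᵥ (b j : Fin n → ℂ) = (σ j : ℂ) • (b j : Fin n → ℂ) := by
    intro j
    rw [coe_smul_vec]
    exact hP.1.mulVec_eigenvectorBasis j
  have hCC : ∀ j, (Cᴴ * C) *ᵥ (b j : Fin n → ℂ) = ((σ j)^2 : ℂ) • (b j : Fin n → ℂ) := by
    intro j
    rw [← hPC, ← mulVec_mulVec, hbe j, mulVec_smul, hbe j, smul_smul]
    push_cast
    ring_nf
  have hdot : ∀ i j, star ((b i : Fin n → ℂ)) ⬝ᵥ (b j : Fin n → ℂ)
      = if i = j then 1 else 0 := by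
    intro i j
    rw [← inner_eq_dot]
    exact orthonormal_iff_ite.mp b.orthonormal i j
  have hCb : ∀ i j, star (C *ᵥ (b i : Fin n → ℂ)) ⬝ᵥ (C *ᵥ (b j : Fin n → ℂ))
      = ((σ j)^2 : ℂ) * (if i = j then 1 else 0) := by
    intro i j
    rw [mulVec_dot_mulVec, hCC j, dotProduct_smul, hdot i j, smul_eq_mul]
  -- the orthonormal family on the support of σ
  set v : Fin n → EuclideanSpace ℂ (Fin n) :=
    fun i => WithLp.toLp 2 (((σ i)⁻¹ : ℂ) • (C *ᵥ (b i : Fin n → ℂ)) : Fin n → ℂ) with hv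
  have hvon : Orthonormal ℂ (Set.restrict {i | σ i ≠ 0} v) := by
    rw [orthonormal_iff_ite]
    intro i j
    have : (inner ℂ (v i.1) (v j.1) : ℂ)
        = star ((σ i.1)⁻¹ : ℂ) * ((σ j.1)⁻¹ : ℂ)
          * (((σ j.1)^2 : ℂ) * (if i.1 = j.1 then 1 else 0)) := by
      rw [inner_eq_dot]
      rw [show ((v i.1 : Fin n → ℂ)) = ((σ i.1)⁻¹ : ℂ) • (C *ᵥ (b i.1 : Fin n → ℂ)) from rfl,
        show ((v j.1 : Fin n → ℂ)) = ((σ j.1)⁻¹ : ℂ) • (C *ᵥ (b j.1 : Fin n → ℂ)) from rfl]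
      rw [star_smul, smul_dotProduct, dotProduct_smul, hCb i.1 j.1, smul_eq_mul, smul_eq_mul]
      ring
    rw [show ({i | σ i ≠ 0}.restrict v i) = v i.1 from rfl,
      show ({i | σ i ≠ 0}.restrict v j) = v j.1 from rfl, this]
    rcases eq_or_ne i j with h | h
    · subst h
      have hi : (σ i.1 : ℂ) ≠ 0 := by
        exact_mod_cast (i.2 : σ i.1 ≠ 0)
      rw [if_pos rfl, if_pos rfl, ← Complex.ofReal_inv, Complex.star_def,
        Complex.conj_ofReal, Complex.ofReal_inv]
      field_simp
    · have : i.1 ≠ j.1 := fun hh => h (Subtype.ext hh)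
      simp [this, h]
  obtain ⟨g, hg⟩ := hvon.exists_orthonormalBasis_extension_of_card_eq
    (by simp [finrank_euclideanSpace])
  -- assemble
  set S := obMat b with hS
  set M := obMat g with hM
  have hSu := obMat_mem b
  have hMu := obMat_mem g
  have hPd : P = S * diagonal (fun k => ((σ k : ℝ) : ℂ)) * Sᴴ := diag_of_eigenbasis b _ hbe
  have hSu1 : Sᴴ * S = 1 := by simpa [Matrix.star_eq_conjTranspose] using Matrix.mem_unitaryGroup_iff'.mp hSu
  have hkey : C * S = M * diagonal (fun k => ((σ k : ℝ) : ℂ)) := by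
    apply eq_of_mulVec_single
    intro j
    rw [← mulVec_mulVec, ← mulVec_mulVec, obMat_mulVec_single, Matrix.diagonal_mulVec_single]
    rw [show (Pi.single j ((σ j : ℂ) * 1) : Fin n → ℂ)
        = (σ j : ℂ) • (Pi.single j 1 : Fin n → ℂ) by ext i; simp [Pi.single_apply]]
    rw [mulVec_smul, obMat_mulVec_single]
    rcases eq_or_ne (σ j) 0 with h0 | h0
    · have hz : C *ᵥ (b j : Fin n → ℂ) = 0 := by
        apply dotProduct_star_self_eq_zero.mp
        rw [hCb j j, h0]
        simp
      rw [hz, h0]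
      simp
    · have := hg j h0
      rw [show (g j : Fin n → ℂ) = (v j : Fin n → ℂ) by rw [this]]
      rw [show ((v j : Fin n → ℂ)) = ((σ j)⁻¹ : ℂ) • (C *ᵥ (b j : Fin n → ℂ)) from rfl]
      rw [smul_smul]
      rw [mul_inv_cancel₀ (by exact_mod_cast h0)]
      simp
  refine ⟨M * Sᴴ, mul_mem hMu (Unitary.star_mem hSu), ?_⟩
  calc C = C * (S * Sᴴ) := by
        rw [show S * Sᴴ = 1 by simpa [Matrix.star_eq_conjTranspose] using Matrix.mem_unitaryGroup_iff.mp hSu, Matrix.mul_one]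
    _ = (C * S) * Sᴴ := by rw [Matrix.mul_assoc]
    _ = M * diagonal (fun k => ((σ k : ℝ) : ℂ)) * Sᴴ := by rw [hkey]
    _ = M * Sᴴ * P := by
        rw [hPd]
        calc M * diagonal (fun k => ((σ k : ℝ) : ℂ)) * Sᴴ
            = M * ((Sᴴ * S) * diagonal (fun k => ((σ k : ℝ) : ℂ))) * Sᴴ := by
              rw [hSu1, Matrix.one_mul]
          _ = M * Sᴴ * (S * diagonal (fun k => ((σ k : ℝ) : ℂ)) * Sᴴ) := by
              simp only [Matrix.mul_assoc]

noncomputable def toE (u : Fin n → ℂ) : EuclideanSpace ℂ (Fin n) :=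
  (WithLp.equiv 2 (Fin n → ℂ)).symm u

lemma norm_eq_sqrt_dot (u : Fin n → ℂ) :
    ‖toE u‖ = Real.sqrt ((star u ⬝ᵥ u).re) := by
  rw [EuclideanSpace.norm_eq, dot_star_self, Complex.ofReal_re]
  congr 1
  apply Finset.sum_congr rfl
  intro i _
  rw [Complex.normSq_eq_norm_sq]
  rfl

lemma dot_re_le_cs (u w : Fin n → ℂ) :
    (star u ⬝ᵥ w).re ≤ Real.sqrt ((star u ⬝ᵥ u).re * (star w ⬝ᵥ w).re) := by
  have h1 : (star u ⬝ᵥ w) = (inner ℂ (toE u) (toE w) : ℂ) :=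
    (inner_eq_dot _ _).symm
  have h2 : (star u ⬝ᵥ w).re ≤ ‖(inner ℂ (toE u) (toE w) : ℂ)‖ := by
    rw [h1]
    exact Complex.re_le_norm _
  refine le_trans (le_trans h2 (norm_inner_le_norm _ _)) ?_
  rw [norm_eq_sqrt_dot, norm_eq_sqrt_dot, ← Real.sqrt_mul]
  · have h3 : (star u ⬝ᵥ u).re = ((∑ i, Complex.normSq (u i) : ℝ) : ℂ).re := by
      rw [dot_star_self]
    rw [h3, Complex.ofReal_re]
    exact Finset.sum_nonneg fun i _ => Complex.normSq_nonneg _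

lemma dot_conjTranspose_self (M : Matrix (Fin n) (Fin n) ℂ) (x : Fin n → ℂ) :
    star x ⬝ᵥ (Mᴴ *ᵥ x) = star (star x ⬝ᵥ (M *ᵥ x)) := by
  calc star x ⬝ᵥ (Mᴴ *ᵥ x) = star (star (Mᴴ *ᵥ x) ⬝ᵥ x) := star_dotProduct _ _
    _ = star ((star x ᵥ* M) ⬝ᵥ x) := by rw [star_mulVec, conjTranspose_conjTranspose]
    _ = star (star x ⬝ᵥ (M *ᵥ x)) := by rw [← dotProduct_mulVec]

lemma half_re_trick (z : ℂ) : ((1/2 : ℂ) * (z + star z)).re = z.re := by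
  rw [Complex.star_def, Complex.add_conj]
  simp

lemma hyp_check {A W : Matrix (Fin n) (Fin n) ℂ} (hW : W ∈ Matrix.unitaryGroup (Fin n) ℂ)
    {PA : Matrix (Fin n) (Fin n) ℂ} (hPA : PA.PosSemidef) (hPA2 : PA * PA = Aᴴ * A)
    (x : Fin n → ℂ) :
    (star x ⬝ᵥ (((1/2 : ℂ) • (Wᴴ * A + Aᴴ * W)) *ᵥ x)).re ≤
      Real.sqrt ((star x ⬝ᵥ x).re * (star (PA *ᵥ x) ⬝ᵥ (PA *ᵥ x)).re) := by
  have hz : star x ⬝ᵥ (((1/2 : ℂ) • (Wᴴ * A + Aᴴ * W)) *ᵥ x)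
      = (1/2 : ℂ) * ((star x ⬝ᵥ ((Wᴴ * A) *ᵥ x)) + star (star x ⬝ᵥ ((Wᴴ * A) *ᵥ x))) := by
    rw [smul_mulVec, dotProduct_smul, smul_eq_mul, add_mulVec, dotProduct_add]
    congr 2
    rw [show Aᴴ * W = (Wᴴ * A)ᴴ by rw [conjTranspose_mul, conjTranspose_conjTranspose]]
    exact dot_conjTranspose_self _ x
  rw [hz, half_re_trick]
  have hz2 : star x ⬝ᵥ ((Wᴴ * A) *ᵥ x) = star (W *ᵥ x) ⬝ᵥ (A *ᵥ x) := by
    rw [star_mulVec, ← mulVec_mulVec, dotProduct_mulVec]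
  rw [hz2]
  refine le_trans (dot_re_le_cs _ _) ?_
  have e1 : star (W *ᵥ x) ⬝ᵥ (W *ᵥ x) = star x ⬝ᵥ x := by
    have hmem : Wᴴ ∈ Matrix.unitaryGroup (Fin n) ℂ := by
      rw [← Matrix.star_eq_conjTranspose]
      exact Unitary.star_mem hW
    have := dot_unitary_invariant hmem x
    simpa [conjTranspose_conjTranspose] using this
  have e2 : star (A *ᵥ x) ⬝ᵥ (A *ᵥ x) = star (PA *ᵥ x) ⬝ᵥ (PA *ᵥ x) := by
    rw [mulVec_dot_self, mulVec_dot_self, hPA.1.eq, hPA2]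
  rw [e1, e2]

theorem thompson {A B : Matrix (Fin n) (Fin n) ℂ}
    {PA PB PC : Matrix (Fin n) (Fin n) ℂ}
    (hPA : PA.PosSemidef) (hPA2 : PA * PA = Aᴴ * A)
    (hPB : PB.PosSemidef) (hPB2 : PB * PB = Bᴴ * B)
    (hPC : PC.PosSemidef) (hPC2 : PC * PC = (A + B)ᴴ * (A + B)) :
    ∃ U ∈ Matrix.unitaryGroup (Fin n) ℂ, ∃ V ∈ Matrix.unitaryGroup (Fin n) ℂ,
      (U * PA * Uᴴ + V * PB * Vᴴ - PC).PosSemidef := by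
  obtain ⟨W, hW, hWC⟩ := polar_decomp hPC hPC2
  have hWu1 : Wᴴ * W = 1 := by simpa [Matrix.star_eq_conjTranspose] using Matrix.mem_unitaryGroup_iff'.mp hW
  have hWAB : Wᴴ * (A + B) = PC := by
    rw [hWC, ← Matrix.mul_assoc, hWu1, Matrix.one_mul]
  set H₁ := (1/2 : ℂ) • (Wᴴ * A + Aᴴ * W) with hH₁
  set H₂ := (1/2 : ℂ) • (Wᴴ * B + Bᴴ * W) with hH₂
  have hHsum : H₁ + H₂ = PC := by
    rw [hH₁, hH₂, ← smul_add]
    have : Wᴴ * A + Aᴴ * W + (Wᴴ * B + Bᴴ * W) = Wᴴ * (A + B) + (A + B)ᴴ * W := by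
      rw [Matrix.mul_add, conjTranspose_add, Matrix.add_mul]
      abel
    rw [this, hWAB]
    have : (A + B)ᴴ * W = PCᴴ := by
      rw [← hWAB, conjTranspose_mul, conjTranspose_conjTranspose]
    rw [this, hPC.1.eq, smul_add]
    rw [show ((1/2 : ℂ) • PC + (1/2 : ℂ) • PC) = ((1/2 : ℂ) + (1/2 : ℂ)) • PC by rw [add_smul]]
    norm_num
  have hH₁h : H₁.IsHermitian := by
    rw [hH₁, Matrix.IsHermitian]
    rw [conjTranspose_smul, conjTranspose_add, conjTranspose_mul, conjTranspose_mul,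
      conjTranspose_conjTranspose, conjTranspose_conjTranspose]
    rw [show (star (1/2 : ℂ)) = (1/2 : ℂ) by simp]
    rw [add_comm]
  have hH₂h : H₂.IsHermitian := by
    rw [hH₂, Matrix.IsHermitian]
    rw [conjTranspose_smul, conjTranspose_add, conjTranspose_mul, conjTranspose_mul,
      conjTranspose_conjTranspose, conjTranspose_conjTranspose]
    rw [show (star (1/2 : ℂ)) = (1/2 : ℂ) by simp]
    rw [add_comm]
  obtain ⟨U, hU, hUps⟩ := key_lemma hH₁h hPA (fun x => hyp_check hW hPA hPA2 x)
  obtain ⟨V, hV, hVps⟩ := key_lemma hH₂h hPB (fun x => hyp_check hW hPB hPB2 x)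
  refine ⟨U, hU, V, hV, ?_⟩
  have : U * PA * Uᴴ + V * PB * Vᴴ - PC
      = (U * PA * Uᴴ - H₁) + (V * PB * Vᴴ - H₂) := by
    rw [← hHsum]
    abel
  rw [this]
  exact hUps.add hVps

end ThompsonAux

theorem abs_add_le_unitary_conj {n : ℕ} (A B : Matrix (Fin n) (Fin n) ℂ) :
    ∃ U ∈ Matrix.unitaryGroup (Fin n) ℂ, ∃ V ∈ Matrix.unitaryGroup (Fin n) ℂ,
      (U * matAbs A * Uᴴ + V * matAbs B * Vᴴ - matAbs (A + B)).PosSemidef :=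
  thompson (matAbs_posSemidef A) (matAbs_mul_self A)
    (matAbs_posSemidef B) (matAbs_mul_self B)
    (matAbs_posSemidef (A + B)) (matAbs_mul_self (A + B))
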